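/- If a set L of lines in PG(k-1,q) satisfies the avoidance property (no codimension-2 projective subspace meets every line of L), then the union of the point sets of the lines in L is a strong blocking set in PG(k-1,q). -/
import Mathlib


open Projectivization

/-- The set of points of `M` lying on a subspace `H`, viewed via their spans:
the span of the points of `M` contained in `H`. -/
def projSpan {K V : Type*} [DivisionRing K] [AddCommGroup V] [Module K V]
    (M : Set (Projectivization K V)) : Submodule K V :=
  ⨆ P ∈ M, P.submodule

/-- A set of projective points is a strong blocking set if for every hyperplane `H`
(codimension-1 subspace), the points of `M` lying on `H` span `H`. -/
def IsStrongBlockingSet {K V : Type*} [DivisionRing K] [AddCommGroup V] [Module K V]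
    (M : Set (Projectivization K V)) : Prop :=
  ∀ H : Submodule K V, Module.finrank K H + 1 = Module.finrank K V →
    projSpan {P | P ∈ M ∧ P.submodule ≤ H} = H

/-- A set of lines (2-dimensional subspaces) satisfies the avoidance property if
no codimension-2 subspace meets every line of the set. -/
def AvoidanceProperty {K V : Type*} [DivisionRing K] [AddCommGroup V] [Module K V]
    (L : Set (Submodule K V)) : Prop :=
  ¬ ∃ W : Submodule K V, Module.finrank K W + 2 = Module.finrank K V ∧
      ∀ ℓ ∈ L, W ⊓ ℓ ≠ ⊥

/-- Any submodule of dimension at most `n` in a finite-dimensional space of dimension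
at least `n` is contained in a submodule of dimension exactly `n`. -/
lemma exists_superspace_finrank_eq {K V : Type*} [Field K] [AddCommGroup V] [Module K V]
    [FiniteDimensional K V] (S : Submodule K V) (n : ℕ)
    (h1 : Module.finrank K S ≤ n) (h2 : n ≤ Module.finrank K V) :
    ∃ W : Submodule K V, S ≤ W ∧ Module.finrank K W = n := by
  induction n with
  | zero =>
    have : S = ⊥ := Submodule.finrank_eq_zero.mp (Nat.le_zero.mp h1)
    exact ⟨⊥, this.le, finrank_bot K V⟩
  | succ m ih =>
    rcases lt_or_eq_of_le h1 with hlt | heq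
    · obtain ⟨W, hSW, hW⟩ := ih (Nat.lt_succ_iff.mp hlt) (le_trans (Nat.le_succ m) h2)
      have hWV : Module.finrank K W < Module.finrank K V := by omega
      obtain ⟨x, hx⟩ := W.exists_of_finrank_lt hWV
      have hxW : x ∉ W := by
        intro h; exact hx 1 one_ne_zero (by simpa using h)
      refine ⟨W ⊔ K ∙ x, le_trans hSW le_sup_left, ?_⟩
      have hx0 : x ≠ 0 := fun h => hxW (h ▸ W.zero_mem)
      have hdisj : W ⊓ (K ∙ x) = ⊥ :=
        ((Submodule.disjoint_span_singleton' hx0).mpr hxW).eq_bot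
      have := Submodule.finrank_sup_add_finrank_inf_eq W (K ∙ x)
      rw [hdisj, finrank_bot, finrank_span_singleton hx0] at this
      omega
    · exact ⟨S, le_rfl, heq⟩

/-- If a set of lines in `PG(k-1, q)` satisfies the avoidance property, then the union
of their point sets is a strong blocking set. -/
theorem stmt2 {q k : ℕ} (K : Type*) [Field K] [Fintype K] (hq : Fintype.card K = q)
    (L : Set (Submodule K (Fin k → K))) (hL : ∀ ℓ ∈ L, Module.finrank K ℓ = 2)
    (hAv : AvoidanceProperty L) :
    IsStrongBlockingSet {P : Projectivization K (Fin k → K) | ∃ ℓ ∈ L, P.submodule ≤ ℓ} := by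
  intro H hH
  have hV : Module.finrank K (Fin k → K) = k := Module.finrank_fin_fun K
  set S : Submodule K (Fin k → K) :=
    projSpan {P : Projectivization K (Fin k → K) |
      (∃ ℓ ∈ L, P.submodule ≤ ℓ) ∧ P.submodule ≤ H} with hS
  have hSH : S ≤ H := by
    apply iSup_le; intro P; apply iSup_le; intro hP; exact hP.2
  by_contra hne
  have hlt : Module.finrank K S < Module.finrank K H :=
    Submodule.finrank_lt_finrank_of_lt (lt_of_le_of_ne hSH hne)
  -- extend S to a codimension-2 subspace W
  obtain ⟨W, hSW, hWrank⟩ := exists_superspace_finrank_eq S (Module.finrank K H - 1)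
    (by omega) (by omega)
  apply hAv
  refine ⟨W, by omega, fun ℓ hℓ => ?_⟩
  -- the line ℓ meets H nontrivially
  have hℓ2 : Module.finrank K ℓ = 2 := hL ℓ hℓ
  have hmeet : ℓ ⊓ H ≠ ⊥ := by
    intro hbot
    have h1 := Submodule.finrank_sup_add_finrank_inf_eq ℓ H
    rw [hbot, finrank_bot] at h1
    have h2 : Module.finrank K ↥(ℓ ⊔ H) ≤ Module.finrank K (Fin k → K) :=
      Submodule.finrank_le _
    omega
  -- pick a nonzero point in ℓ ⊓ H
  obtain ⟨x, hxmem, hx0⟩ := Submodule.exists_mem_ne_zero_of_ne_bot hmeet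
  have hxℓ : x ∈ ℓ := hxmem.1
  have hxH : x ∈ H := hxmem.2
  set P : Projectivization K (Fin k → K) := Projectivization.mk K x hx0
  have hPsub : P.submodule = K ∙ x := Projectivization.submodule_mk x hx0
  have hPmem : P ∈ {P : Projectivization K (Fin k → K) |
      (∃ ℓ ∈ L, P.submodule ≤ ℓ) ∧ P.submodule ≤ H} := by
    constructor
    · exact ⟨ℓ, hℓ, by rw [hPsub]; exact (Submodule.span_singleton_le_iff_mem x ℓ).mpr hxℓ⟩
    · rw [hPsub]; exact (Submodule.span_singleton_le_iff_mem x H).mpr hxH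
  have hPS : P.submodule ≤ S := by
    rw [hS, projSpan]
    exact le_biSup _ hPmem
  intro hbot
  have hxW : x ∈ W := hSW (hPS (hPsub ▸ Submodule.mem_span_singleton_self x))
  have : x ∈ W ⊓ ℓ := ⟨hxW, hxℓ⟩
  rw [hbot] at this
  exact hx0 (by simpa using this)
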